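/- Fix positive integers s, t, k. Let U = P¹ ∪ ... ∪ P^{s+2t} ⊂ ℝ² where each P^i is a decreasing chain (x increasing, y decreasing), the lengths of P¹,...,P^{s+2t} are t, t+1, ..., 2t−1, then 2t repeated s times, then 2t−1, ..., t+1, t, and every point of P^i is coordinatewise strictly smaller than every point of P^j whenever i < j. Then every k-modal path subset Q of U satisfies |Q| ≤ (k+2)t + s − k/2. -/

import Mathlib

def Generic (S : Finset (ℝ × ℝ)) : Prop :=
  ∀ p ∈ S, ∀ q ∈ S, p ≠ q → p.1 ≠ q.1 ∧ p.2 ≠ q.2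

def IncChain (P : Finset (ℝ × ℝ)) : Prop :=
  ∀ p ∈ P, ∀ q ∈ P, p ≠ q → (p.1 < q.1 ∧ p.2 < q.2) ∨ (q.1 < p.1 ∧ q.2 < p.2)

def DecChain (P : Finset (ℝ × ℝ)) : Prop :=
  ∀ p ∈ P, ∀ q ∈ P, p ≠ q → (p.1 < q.1 ∧ q.2 < p.2) ∨ (q.1 < p.1 ∧ p.2 < q.2)

/-- Sections of a signed k-modal path: x-consecutive, with the even-indexed
sections increasing iff up = true, and alternating monotonicities. -/
def SignedSections (k : ℕ) (up : Bool) (F : Fin (k + 1) → Finset (ℝ × ℝ)) : Prop :=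
  (∀ i j : Fin (k + 1), i < j → ∀ p ∈ F i, ∀ q ∈ F j, p.1 < q.1) ∧
  (∀ j : Fin (k + 1), if decide ((j : ℕ) % 2 = 0) = up then IncChain (F j) else DecChain (F j))

/-- P is a (+k)-path (up = true) or a (−k)-path (up = false). -/
def IsSignedModalPath (k : ℕ) (up : Bool) (P : Finset (ℝ × ℝ)) : Prop :=
  ∃ F : Fin (k + 1) → Finset (ℝ × ℝ),
    (∀ p ∈ P, ∃ i, p ∈ F i) ∧ (∀ i, F i ⊆ P) ∧ SignedSections k up F

def IsModalPath (k : ℕ) (P : Finset (ℝ × ℝ)) : Prop :=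
  ∃ up : Bool, IsSignedModalPath k up P

/-- Length profile of the decreasing chains in the construction U^{s,t}:
t, t+1, ..., 2t−1, then 2t (s times), then 2t−1, ..., t+1, t. -/
def chainLen (s t i : ℕ) : ℕ :=
  if i < t then t + i else if i < t + s then 2 * t else 3 * t + s - 1 - i

theorem stmt13 (s t k : ℕ) (hs : 1 ≤ s) (ht : 1 ≤ t) (hk : 1 ≤ k)
    (P : Fin (s + 2 * t) → Finset (ℝ × ℝ))
    (hdec : ∀ i, DecChain (P i))
    (hcard : ∀ i : Fin (s + 2 * t), (P i).card = chainLen s t (i : ℕ))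
    (hcomp : ∀ i j : Fin (s + 2 * t), i < j →
      ∀ p ∈ P i, ∀ q ∈ P j, p.1 < q.1 ∧ p.2 < q.2)
    (Q : Finset (ℝ × ℝ)) (hQ : Q ⊆ Finset.univ.biUnion P) (hmodal : IsModalPath k Q) :
    (Q.card : ℝ) ≤ ((k : ℝ) + 2) * t + s - (k : ℝ)/2 := by
  classical
  obtain ⟨up, F, hcov, hsub, hx, hmono⟩ := hmodal
  -- chains are pairwise disjoint
  have hPdisj : ∀ c c' : Fin (s + 2*t), c ≠ c' → ∀ p, p ∈ P c → p ∈ P c' → False := by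
    intro c c' hne p hp hp'
    rcases lt_or_gt_of_ne hne with h | h
    · exact lt_irrefl _ (hcomp c c' h p hp p hp').1
    · exact lt_irrefl _ (hcomp c' c h p hp' p hp).1
  have hchain : ∀ p ∈ Q, ∃ c, p ∈ P c := by
    intro p hp
    have h := hQ hp
    simpa using Finset.mem_biUnion.mp h
  have hL1 : ∀ (c c' : Fin (s + 2*t)) p q, p ∈ P c → q ∈ P c' → p.1 < q.1 → c ≤ c' := by
    intro c c' p q hp hq hlt
    by_contra h
    push_neg at h
    linarith [(hcomp c' c h q hq p hp).1]
  set r : ℕ := cond up 1 0 with hr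
  have hr01 : r = 0 ∨ r = 1 := by cases up <;> simp [hr]
  have hmonoD : ∀ j : Fin (k+1), (j:ℕ) % 2 = r → DecChain (F j) := by
    intro j hj
    have h := hmono j
    cases up with
    | false => simp only [hr, Bool.cond_false] at hj; simp [hj] at h; exact h
    | true => simp only [hr, Bool.cond_true] at hj; simp [hj] at h; exact h
  have hmonoI : ∀ j : Fin (k+1), (j:ℕ) % 2 ≠ r → IncChain (F j) := by
    intro j hj
    have h := hmono j
    cases up with
    | false =>
      simp only [hr, Bool.cond_false] at hj
      have h2 : (j:ℕ) % 2 = 1 := by omega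
      simp [h2] at h; exact h
    | true =>
      simp only [hr, Bool.cond_true] at hj
      have h2 : (j:ℕ) % 2 = 0 := by omega
      simp [h2] at h; exact h
  -- a decreasing section lives in a single chain
  have hdecone : ∀ j : Fin (k+1), DecChain (F j) → ∀ p q, p ∈ F j → q ∈ F j →
      ∀ c c', p ∈ P c → q ∈ P c' → c = c' := by
    intro j hdc p q hp hq c c' hpc hqc
    by_contra hne
    have hpq : p ≠ q := by rintro rfl; exact hPdisj c c' hne p hpc hqc
    rcases lt_or_gt_of_ne hne with h | h
    · have h1 := hcomp c c' h p hpc q hqc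
      rcases hdc p hp q hq hpq with ⟨h2a, h2b⟩ | ⟨h2a, h2b⟩
      · linarith [h1.2]
      · linarith [h1.1]
    · have h1 := hcomp c' c h q hqc p hpc
      rcases hdc p hp q hq hpq with ⟨h2a, h2b⟩ | ⟨h2a, h2b⟩
      · linarith [h1.1]
      · linarith [h1.2]
  -- an increasing section meets each chain in at most one point
  have hincone : ∀ j : Fin (k+1), IncChain (F j) → ∀ (c : Fin (s+2*t)) p q, p ∈ F j → q ∈ F j →
      p ∈ P c → q ∈ P c → p = q := by
    intro j hic c p q hp hq hpc hqc
    by_contra hne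
    rcases hic p hp q hq hne with ⟨h1, h2⟩ | ⟨h1, h2⟩ <;>
      rcases hdec c p hpc q hqc hne with ⟨h3, h4⟩ | ⟨h3, h4⟩ <;> linarith
  set touchF : Fin (s+2*t) → Finset (Fin (k+1)) :=
    fun c => Finset.univ.filter (fun j => ((F j) ∩ (P c)).Nonempty) with htouchF
  set DD : Finset (Fin (s+2*t)) :=
    Finset.univ.filter (fun c => ∃ j : Fin (k+1), (j:ℕ) % 2 = r ∧ ((F j) ∩ (P c)).Nonempty) with hDD
  set T : Finset (Fin (s+2*t)) := Finset.univ.filter (fun c => (touchF c).Nonempty) with hT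
  have hDDT : DD ⊆ T := by
    intro c hc
    simp only [hDD, Finset.mem_filter] at hc
    obtain ⟨-, j, -, hne⟩ := hc
    simp only [hT, htouchF, Finset.mem_filter]
    exact ⟨Finset.mem_univ _, j, Finset.mem_filter.2 ⟨Finset.mem_univ _, hne⟩⟩
  -- master inequality pieces
  have hQsplit : Q.card ≤ ∑ c : Fin (s+2*t), (Q ∩ P c).card := by
    have hsub2 : Q ⊆ Finset.univ.biUnion (fun c => Q ∩ P c) := by
      intro p hp
      obtain ⟨c, hc⟩ := hchain p hp
      exact Finset.mem_biUnion.2 ⟨c, Finset.mem_univ _, Finset.mem_inter.2 ⟨hp, hc⟩⟩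
    calc Q.card ≤ (Finset.univ.biUnion (fun c => Q ∩ P c)).card := Finset.card_le_card hsub2
      _ ≤ ∑ c : Fin (s+2*t), (Q ∩ P c).card := Finset.card_biUnion_le
  have hc_notDD : ∀ c, c ∉ DD → (Q ∩ P c).card ≤ (touchF c).card := by
    intro c hc
    have hsubU : Q ∩ P c ⊆ (touchF c).biUnion (fun j => F j ∩ P c) := by
      intro p hp
      rw [Finset.mem_inter] at hp
      obtain ⟨j, hj⟩ := hcov p hp.1
      refine Finset.mem_biUnion.2 ⟨j, ?_, Finset.mem_inter.2 ⟨hj, hp.2⟩⟩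
      simp only [htouchF, Finset.mem_filter]
      exact ⟨Finset.mem_univ _, ⟨p, Finset.mem_inter.2 ⟨hj, hp.2⟩⟩⟩
    calc (Q ∩ P c).card ≤ ((touchF c).biUnion (fun j => F j ∩ P c)).card :=
        Finset.card_le_card hsubU
      _ ≤ ∑ j ∈ touchF c, (F j ∩ P c).card := Finset.card_biUnion_le
      _ ≤ ∑ j ∈ touchF c, 1 := by
          refine Finset.sum_le_sum ?_
          intro j hj
          refine Finset.card_le_one.2 ?_
          intro p hp q hq
          rw [Finset.mem_inter] at hp hq
          refine hincone j ?_ c p q hp.1 hq.1 hp.2 hq.2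
          refine hmonoI j ?_
          intro hpar
          refine hc ?_
          simp only [hDD, Finset.mem_filter]
          refine ⟨Finset.mem_univ _, j, hpar, ?_⟩
          simp only [htouchF, Finset.mem_filter] at hj
          exact hj.2
      _ = (touchF c).card := by simp
  have hmaster : Q.card ≤ (∑ c ∈ DD, (P c).card) + ∑ c ∈ DDᶜ, (touchF c).card := by
    have h1 : ∑ c : Fin (s+2*t), (Q ∩ P c).card
        = ∑ c ∈ DD, (Q ∩ P c).card + ∑ c ∈ DDᶜ, (Q ∩ P c).card :=
      (Finset.sum_add_sum_compl DD _).symm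
    have h2 : ∑ c ∈ DD, (Q ∩ P c).card ≤ ∑ c ∈ DD, (P c).card :=
      Finset.sum_le_sum (fun c _ => Finset.card_le_card Finset.inter_subset_right)
    have h3 : ∑ c ∈ DDᶜ, (Q ∩ P c).card ≤ ∑ c ∈ DDᶜ, (touchF c).card :=
      Finset.sum_le_sum (fun c hc => hc_notDD c (by simpa using hc))
    omega
  have hYX : ∑ c ∈ DDᶜ, (touchF c).card ≤
      (T \ DD).card + ∑ c ∈ T \ DD, ((touchF c).card - 1) := by
    have hsub1 : T \ DD ⊆ DDᶜ := by
      intro c hc; simp only [Finset.mem_compl]; exact (Finset.mem_sdiff.1 hc).2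
    have h0 : ∀ c ∈ DDᶜ, c ∉ T \ DD → (touchF c).card = 0 := by
      intro c hc hnot
      have hcT : c ∉ T := by
        intro hcT; exact hnot (Finset.mem_sdiff.2 ⟨hcT, by simpa using hc⟩)
      simp only [hT, Finset.mem_filter] at hcT
      push_neg at hcT
      have h2 := hcT (Finset.mem_univ _)
      simp [h2]
    have heq : ∑ c ∈ T \ DD, (touchF c).card = ∑ c ∈ DDᶜ, (touchF c).card :=
      Finset.sum_subset hsub1 h0
    rw [← heq]
    have hb : ∀ c ∈ T \ DD, (touchF c).card ≤ 1 + ((touchF c).card - 1) := by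
      intro c hc
      have hcT : c ∈ T := (Finset.mem_sdiff.1 hc).1
      simp only [hT, Finset.mem_filter] at hcT
      have := Finset.card_pos.2 hcT.2
      omega
    calc ∑ c ∈ T \ DD, (touchF c).card ≤ ∑ c ∈ T \ DD, (1 + ((touchF c).card - 1)) :=
        Finset.sum_le_sum hb
      _ = (T \ DD).card + ∑ c ∈ T \ DD, ((touchF c).card - 1) := by
        rw [Finset.sum_add_distrib, Finset.sum_const, smul_eq_mul, mul_one]
  -- nonminimal touching sections
  set nonmin : Fin (s+2*t) → Finset (Fin (k+1)) :=
    fun c => (touchF c).filter (fun j => ∃ j' ∈ touchF c, j' < j) with hnonmin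
  have hnonmincard : ∀ c, (touchF c).card - 1 ≤ (nonmin c).card := by
    intro c
    have hsplit : ((touchF c).filter (fun j => ∃ j' ∈ touchF c, j' < j)).card
        + ((touchF c).filter (fun j => ¬ ∃ j' ∈ touchF c, j' < j)).card = (touchF c).card :=
      Finset.card_filter_add_card_filter_not _
    have hone : ((touchF c).filter (fun j => ¬ ∃ j' ∈ touchF c, j' < j)).card ≤ 1 := by
      refine Finset.card_le_one.2 ?_
      intro a ha b hb
      simp only [Finset.mem_filter] at ha hb
      by_contra hne
      rcases lt_or_gt_of_ne hne with h | h
      · exact hb.2 ⟨a, ha.1, h⟩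
      · exact ha.2 ⟨b, hb.1, h⟩
    simp only [hnonmin]
    omega
  -- key sandwich lemma
  have hkey : ∀ c, c ∈ T \ DD → ∀ j ∈ nonmin c,
      1 ≤ (j:ℕ) ∧ ((j:ℕ)-1) % 2 = r ∧
        F ⟨(j:ℕ)-1, Nat.lt_of_le_of_lt (Nat.sub_le _ _) j.isLt⟩ = ∅ := by
    intro c hc j hj
    rw [Finset.mem_sdiff] at hc
    have hcD := hc.2
    simp only [hnonmin, Finset.mem_filter] at hj
    obtain ⟨hjt, j0, hj0t, hj0lt⟩ := hj
    have hjtouch : (F j ∩ P c).Nonempty := by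
      simp only [htouchF, Finset.mem_filter] at hjt; exact hjt.2
    have hj0touch : (F j0 ∩ P c).Nonempty := by
      simp only [htouchF, Finset.mem_filter] at hj0t; exact hj0t.2
    have hnotDD : ∀ j' : Fin (k+1), (j':ℕ) % 2 = r → (F j' ∩ P c).Nonempty → False := by
      intro j' hpar hne
      refine hcD ?_
      simp only [hDD, Finset.mem_filter]
      exact ⟨Finset.mem_univ _, j', hpar, hne⟩
    have hjinc : (j:ℕ) % 2 ≠ r := fun hpar => hnotDD j hpar hjtouch
    have hj0j : (j0:ℕ) < (j:ℕ) := hj0lt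
    have hj1 : 1 ≤ (j:ℕ) := by omega
    refine ⟨hj1, ?_, ?_⟩
    · rcases hr01 with h | h <;> omega
    · have hjppar : (((⟨(j:ℕ)-1, Nat.lt_of_le_of_lt (Nat.sub_le _ _) j.isLt⟩ : Fin (k+1))):ℕ) % 2 = r := by
        show ((j:ℕ)-1) % 2 = r
        rcases hr01 with h | h <;> omega
      rw [Finset.eq_empty_iff_forall_notMem]
      intro q hq
      obtain ⟨b, hb⟩ := hchain q (hsub _ hq)
      have hj0le : (j0:ℕ) ≤ (j:ℕ) - 1 := by omega
      obtain ⟨p1, hp1⟩ := hjtouch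
      obtain ⟨p0, hp0⟩ := hj0touch
      rw [Finset.mem_inter] at hp1 hp0
      have htouchjp : (F (⟨(j:ℕ)-1, Nat.lt_of_le_of_lt (Nat.sub_le _ _) j.isLt⟩ : Fin (k+1)) ∩ P c).Nonempty := by
        rcases eq_or_lt_of_le hj0le with heq | hlt0
        · have hjpj0 : (⟨(j:ℕ)-1, Nat.lt_of_le_of_lt (Nat.sub_le _ _) j.isLt⟩ : Fin (k+1)) = j0 := by
            apply Fin.ext; show (j:ℕ)-1 = (j0:ℕ); omega
          rw [hjpj0]; exact ⟨p0, Finset.mem_inter.2 ⟨hp0.1, hp0.2⟩⟩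
        · have hlt0' : j0 < (⟨(j:ℕ)-1, Nat.lt_of_le_of_lt (Nat.sub_le _ _) j.isLt⟩ : Fin (k+1)) := by
            rw [Fin.lt_def]; show (j0:ℕ) < (j:ℕ)-1; omega
          have hlt1 : (⟨(j:ℕ)-1, Nat.lt_of_le_of_lt (Nat.sub_le _ _) j.isLt⟩ : Fin (k+1)) < j := by
            rw [Fin.lt_def]; show (j:ℕ)-1 < (j:ℕ); omega
          have hq1 : q.1 < p1.1 := hx _ j hlt1 q hq p1 hp1.1
          have hp0q : p0.1 < q.1 := hx j0 _ hlt0' p0 hp0.1 q hq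
          have hble : b ≤ c := hL1 b c q p1 hb hp1.2 hq1
          have hcle : c ≤ b := hL1 c b p0 q hp0.2 hb hp0q
          have hbc : b = c := le_antisymm hble hcle
          exact ⟨q, Finset.mem_inter.2 ⟨hq, hbc ▸ hb⟩⟩
      exact hnotDD _ hjppar htouchjp
  set pr : Fin (k+1) → Fin (k+1) :=
    fun j => ⟨(j:ℕ)-1, Nat.lt_of_le_of_lt (Nat.sub_le _ _) j.isLt⟩ with hpr
  set XS : Finset (Fin (k+1)) := (T \ DD).biUnion (fun c => (nonmin c).image pr) with hXS
  have hXcard : ∑ c ∈ T \ DD, ((touchF c).card - 1) ≤ XS.card := by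
    have hdisj : ∀ c1 ∈ T \ DD, ∀ c2 ∈ T \ DD, c1 ≠ c2 →
        Disjoint ((nonmin c1).image pr) ((nonmin c2).image pr) := by
      intro c1 hc1 c2 hc2 hne
      rw [Finset.disjoint_left]
      intro y hy1 hy2
      simp only [Finset.mem_image] at hy1 hy2
      obtain ⟨a, ha, hax⟩ := hy1
      obtain ⟨b, hb, hbx⟩ := hy2
      have ha1 := (hkey c1 hc1 a ha).1
      have hb1 := (hkey c2 hc2 b hb).1
      have hab : a = b := by
        apply Fin.ext
        have h1 : (a:ℕ) - 1 = (y:ℕ) := congrArg Fin.val hax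
        have h2 : (b:ℕ) - 1 = (y:ℕ) := congrArg Fin.val hbx
        omega
      subst hab
      simp only [hnonmin, Finset.mem_filter] at ha hb
      obtain ⟨hat, a0, ha0t, ha0lt⟩ := ha
      obtain ⟨hbt, b0, hb0t, hb0lt⟩ := hb
      simp only [htouchF, Finset.mem_filter] at hat hbt ha0t hb0t
      obtain ⟨pa, hpa⟩ := hat.2
      obtain ⟨pb, hpb⟩ := hbt.2
      obtain ⟨pa0, hpa0⟩ := ha0t.2
      obtain ⟨pb0, hpb0⟩ := hb0t.2
      rw [Finset.mem_inter] at hpa hpb hpa0 hpb0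
      rcases lt_or_gt_of_ne hne with h | h
      · have hlt : pb0.1 < pa.1 := hx b0 a hb0lt pb0 hpb0.1 pa hpa.1
        have hle : c2 ≤ c1 := hL1 c2 c1 pb0 pa hpb0.2 hpa.2 hlt
        exact absurd h (not_lt.2 hle)
      · have hlt : pa0.1 < pb.1 := hx a0 a ha0lt pa0 hpa0.1 pb hpb.1
        have hle : c1 ≤ c2 := hL1 c1 c2 pa0 pb hpa0.2 hpb.2 hlt
        exact absurd h (not_lt.2 hle)
    have hcardbi : XS.card = ∑ c ∈ T \ DD, ((nonmin c).image pr).card := by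
      simp only [hXS]; exact Finset.card_biUnion hdisj
    have hterm : ∀ c ∈ T \ DD, (touchF c).card - 1 ≤ ((nonmin c).image pr).card := by
      intro c hc
      have hinj : Set.InjOn pr (nonmin c) := by
        intro a ha b hb hab
        have ha1 := (hkey c hc a ha).1
        have hb1 := (hkey c hc b hb).1
        apply Fin.ext
        have hv : (a:ℕ) - 1 = (b:ℕ) - 1 := congrArg Fin.val hab
        omega
      rw [Finset.card_image_of_injOn hinj]
      exact hnonmincard c
    rw [hcardbi]
    exact Finset.sum_le_sum hterm
  set ES : Finset (Fin (k+1)) :=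
    Finset.univ.filter (fun j => (j:ℕ) % 2 = r ∧ (F j).Nonempty) with hES
  have hm'E : DD.card ≤ ES.card := by
    have hfex : ∀ c ∈ DD, ∃ j : Fin (k+1), (j:ℕ)%2 = r ∧ (F j ∩ P c).Nonempty := by
      intro c hc; simp only [hDD, Finset.mem_filter] at hc; exact hc.2
    set f : Fin (s+2*t) → Fin (k+1) := fun c =>
      if h : ∃ j : Fin (k+1), (j:ℕ)%2 = r ∧ (F j ∩ P c).Nonempty then h.choose else 0 with hf
    have hfspec : ∀ c ∈ DD, ((f c : ℕ))%2 = r ∧ (F (f c) ∩ P c).Nonempty := by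
      intro c hc
      have h := hfex c hc
      simp only [hf, dif_pos h]
      exact h.choose_spec
    apply Finset.card_le_card_of_injOn f
    · intro c hc
      have hsp := hfspec c hc
      simp only [hES, Finset.mem_coe, Finset.mem_filter]
      obtain ⟨p, hp⟩ := hsp.2
      exact ⟨Finset.mem_univ _, hsp.1, ⟨p, (Finset.mem_inter.1 hp).1⟩⟩
    · intro c1 hc1 c2 hc2 heq
      have h1 := hfspec c1 hc1
      have h2 := hfspec c2 hc2
      obtain ⟨p1, hp1⟩ := h1.2
      obtain ⟨p2, hp2⟩ := h2.2
      rw [Finset.mem_inter] at hp1 hp2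
      rw [heq] at hp1
      exact hdecone (f c2) (hmonoD _ h2.1) p1 p2 hp1.1 hp2.1 c1 c2 hp1.2 hp2.2
  have hdisjEX : Disjoint ES XS := by
    rw [Finset.disjoint_left]
    intro j hjE hjX
    simp only [hES, Finset.mem_filter] at hjE
    simp only [hXS, Finset.mem_biUnion] at hjX
    obtain ⟨c, hc, hj⟩ := hjX
    simp only [Finset.mem_image] at hj
    obtain ⟨a, ha, hax⟩ := hj
    have hFe := (hkey c hc a ha).2.2
    have hje : F j = ∅ := by rw [← hax]; exact hFe
    rw [hje] at hjE
    simp at hjE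
  -- abbreviations
  set A0 : Prop := ((0:ℕ) % 2 = r ∧ (F (0 : Fin (k+1))).Nonempty) with hA0def
  set Ak : Prop := (k % 2 = r ∧ (F (Fin.last k)).Nonempty) with hAkdef
  set a0 : ℕ := if A0 then 1 else 0 with ha0
  set ak : ℕ := if Ak then 1 else 0 with hak
  -- parity counting lemma
  have hparbound : ∀ (S : Finset ℕ),
      (∀ x ∈ S, x ≤ k ∧ x % 2 = r) → (∀ x ∈ S, x = 0 → a0 = 1) → (∀ x ∈ S, x = k → ak = 1) →
      2 * S.card ≤ k + a0 + ak := by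
    intro S h1 h2 h3
    have hdisj : Disjoint S (S.image (· + 1)) := by
      rw [Finset.disjoint_left]
      intro x hxS hxI
      simp only [Finset.mem_image] at hxI
      obtain ⟨y, hy, hyx⟩ := hxI
      have hx1 := (h1 x hxS).2
      have hy1 := (h1 y hy).2
      rcases hr01 with h | h <;> omega
    have hcard1 : (S ∪ S.image (· + 1)).card = 2 * S.card := by
      rw [Finset.card_union_of_disjoint hdisj,
        Finset.card_image_of_injective _ (add_left_injective 1)]
      ring
    have hsub' : S ∪ S.image (· + 1) ⊆
        Finset.Icc (if 0 ∈ S then 0 else 1) (if k ∈ S then k + 1 else k) := by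
      intro x hx'
      rw [Finset.mem_union] at hx'
      rw [Finset.mem_Icc]
      constructor
      · rcases hx' with hxS | hxI
        · split_ifs with h0
          · omega
          · rcases Nat.eq_zero_or_pos x with rfl | h
            · exact absurd hxS h0
            · exact h
        · simp only [Finset.mem_image] at hxI
          obtain ⟨y, hy, rfl⟩ := hxI
          split_ifs <;> omega
      · rcases hx' with hxS | hxI
        · have := (h1 x hxS).1
          split_ifs <;> omega
        · simp only [Finset.mem_image] at hxI
          obtain ⟨y, hy, rfl⟩ := hxI
          have hy1 := (h1 y hy).1
          split_ifs with hkS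
          · omega
          · have : y ≠ k := fun hyk => hkS (hyk ▸ hy)
            omega
    have hcard2 : (S ∪ S.image (· + 1)).card ≤
        (if k ∈ S then k + 1 else k) + 1 - (if 0 ∈ S then 0 else 1) := by
      calc (S ∪ S.image (· + 1)).card ≤ _ := Finset.card_le_card hsub'
        _ = _ := Nat.card_Icc _ _
    by_cases h0 : 0 ∈ S <;> by_cases hkS : k ∈ S
    · have ha := h2 0 h0 rfl
      have hb := h3 k hkS rfl
      simp only [h0, hkS, if_pos] at hcard2
      omega
    · have ha := h2 0 h0 rfl
      simp only [h0, hkS, if_pos, if_neg, not_false_iff] at hcard2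
      omega
    · have hb := h3 k hkS rfl
      simp only [h0, hkS, if_pos, if_neg, not_false_iff] at hcard2
      omega
    · simp only [h0, hkS, if_neg, not_false_iff] at hcard2
      omega
  have hSb : 2 * (DD.card + ∑ c ∈ T \ DD, ((touchF c).card - 1)) ≤ k + a0 + ak := by
    have h1 : DD.card + ∑ c ∈ T \ DD, ((touchF c).card - 1) ≤ ES.card + XS.card :=
      Nat.add_le_add hm'E hXcard
    have h2 : ES.card + XS.card = (ES ∪ XS).card := (Finset.card_union_of_disjoint hdisjEX).symm
    have h3 : (ES ∪ XS).card = ((ES ∪ XS).image (Fin.val)).card :=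
      (Finset.card_image_of_injOn (Fin.val_injective.injOn)).symm
    have hx1 : ∀ x ∈ (ES ∪ XS).image (Fin.val), x ≤ k ∧ x % 2 = r := by
      intro x hxm
      simp only [Finset.mem_image] at hxm
      obtain ⟨j, hj, rfl⟩ := hxm
      refine ⟨Nat.lt_succ_iff.1 j.isLt, ?_⟩
      rw [Finset.mem_union] at hj
      rcases hj with hj | hj
      · simp only [hES, Finset.mem_filter] at hj; exact hj.2.1
      · simp only [hXS, Finset.mem_biUnion] at hj
        obtain ⟨c, hc, hj⟩ := hj
        simp only [Finset.mem_image] at hj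
        obtain ⟨a, ha, rfl⟩ := hj
        exact (hkey c hc a ha).2.1
    have hx2 : ∀ x ∈ (ES ∪ XS).image (Fin.val), x = 0 → a0 = 1 := by
      intro x hxm hx0
      simp only [Finset.mem_image] at hxm
      obtain ⟨j, hj, hjv⟩ := hxm
      have hjval : (j:ℕ) = 0 := by omega
      rw [Finset.mem_union] at hj
      rcases hj with hj | hj
      · have hj0 : j = (0 : Fin (k+1)) := Fin.ext (by simpa using hjval)
        simp only [hES, Finset.mem_filter] at hj
        rw [hj0] at hj
        rw [ha0, if_pos]
        rw [hA0def]
        exact ⟨by simpa using hj.2.1, hj.2.2⟩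
      · exfalso
        simp only [hXS, Finset.mem_biUnion] at hj
        obtain ⟨c, hc, hj⟩ := hj
        simp only [Finset.mem_image] at hj
        obtain ⟨a, ha, hav⟩ := hj
        have h1a := (hkey c hc a ha).1
        have hFe := (hkey c hc a ha).2.2
        have hav' : (a:ℕ) - 1 = 0 := by
          have hv := congrArg Fin.val hav
          simp only [hpr] at hv
          omega
        have haval : (a:ℕ) = 1 := by omega
        simp only [hnonmin, Finset.mem_filter] at ha
        obtain ⟨hat, a0', ha0t, ha0lt⟩ := ha
        have ha0lt' : (a0':ℕ) < (a:ℕ) := ha0lt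
        have ha0v : (a0':ℕ) = 0 := by omega
        have heqf : (⟨(a:ℕ)-1, Nat.lt_of_le_of_lt (Nat.sub_le _ _) a.isLt⟩ : Fin (k+1)) = a0' := by
          apply Fin.ext; show (a:ℕ)-1 = (a0':ℕ); omega
        rw [heqf] at hFe
        simp only [htouchF, Finset.mem_filter] at ha0t
        obtain ⟨p, hp⟩ := ha0t.2
        rw [Finset.mem_inter] at hp
        rw [hFe] at hp
        exact absurd hp.1 (Finset.notMem_empty p)
    have hx3 : ∀ x ∈ (ES ∪ XS).image (Fin.val), x = k → ak = 1 := by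
      intro x hxm hx0
      simp only [Finset.mem_image] at hxm
      obtain ⟨j, hj, hjv⟩ := hxm
      have hjval : (j:ℕ) = k := by omega
      rw [Finset.mem_union] at hj
      rcases hj with hj | hj
      · have hj0 : j = Fin.last k := Fin.ext (by rw [Fin.val_last]; omega)
        simp only [hES, Finset.mem_filter] at hj
        rw [hj0] at hj
        rw [hak, if_pos]
        rw [hAkdef]
        exact ⟨by simpa [Fin.val_last] using hj.2.1, hj.2.2⟩
      · exfalso
        simp only [hXS, Finset.mem_biUnion] at hj
        obtain ⟨c, hc, hj⟩ := hj
        simp only [Finset.mem_image] at hj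
        obtain ⟨a, ha, hav⟩ := hj
        have hale : (a:ℕ) ≤ k := Nat.lt_succ_iff.1 a.isLt
        have h1a := (hkey c hc a ha).1
        have hav' : (a:ℕ) - 1 = k := by
          have hv := congrArg Fin.val hav
          simp only [hpr] at hv
          omega
        omega
    have hfin := hparbound ((ES ∪ XS).image (Fin.val)) hx1 hx2 hx3
    omega
  -- chain length bounds
  have hlen2t : ∀ c : Fin (s+2*t), (P c).card ≤ 2*t := by
    intro c
    rw [hcard c]
    have := c.isLt
    unfold chainLen
    split_ifs <;> omega
  have hlenlow : ∀ c : Fin (s+2*t), (P c).card ≤ t + (c:ℕ) := by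
    intro c
    rw [hcard c]
    have := c.isLt
    unfold chainLen
    split_ifs <;> omega
  have hlenhigh : ∀ c : Fin (s+2*t), (P c).card + (c:ℕ) + 1 ≤ t + (s + 2*t) := by
    intro c
    rw [hcard c]
    have := c.isLt
    unfold chainLen
    split_ifs <;> omega
  have hcardIcc : ∀ (Tset : Finset (Fin (s+2*t))) (a b : ℕ),
      (∀ c ∈ Tset, a ≤ (c:ℕ) ∧ (c:ℕ) ≤ b) → Tset.card ≤ b + 1 - a := by
    intro Tset a b h
    calc Tset.card = (Tset.image (Fin.val)).card :=
        (Finset.card_image_of_injOn (Fin.val_injective.injOn)).symm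
      _ ≤ (Finset.Icc a b).card := by
          refine Finset.card_le_card ?_
          intro x hx'
          simp only [Finset.mem_image] at hx'
          obtain ⟨c, hc, rfl⟩ := hx'
          exact Finset.mem_Icc.2 (h c hc)
      _ = b + 1 - a := Nat.card_Icc a b
  have hSig2t : ∑ c ∈ DD, (P c).card ≤ DD.card * (2*t) := by
    calc ∑ c ∈ DD, (P c).card ≤ DD.card • (2*t) :=
      Finset.sum_le_card_nsmul DD _ (2*t) (fun c _ => hlen2t c)
    _ = DD.card * (2*t) := smul_eq_mul _ _
  have hSigsplit : ∀ c0 ∈ DD, (∑ c ∈ DD, (P c).card) + 2*t ≤ (P c0).card + DD.card * (2*t) := by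
    intro c0 hc0
    have h1 : ∑ c ∈ DD, (P c).card = (P c0).card + ∑ c ∈ DD.erase c0, (P c).card :=
      (Finset.add_sum_erase DD _ hc0).symm
    have h2 : ∑ c ∈ DD.erase c0, (P c).card ≤ (DD.erase c0).card * (2*t) := by
      calc ∑ c ∈ DD.erase c0, (P c).card ≤ (DD.erase c0).card • (2*t) :=
          Finset.sum_le_card_nsmul _ _ (2*t) (fun c _ => hlen2t c)
        _ = (DD.erase c0).card * (2*t) := smul_eq_mul _ _
    have h3 : (DD.erase c0).card + 1 = DD.card := Finset.card_erase_add_one hc0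
    have h4 : (DD.erase c0).card * (2*t) + 2*t = DD.card * (2*t) := by
      rw [← h3]; ring
    omega
  have hSigsplit2 : ∀ c0 ck : Fin (s+2*t), c0 ∈ DD → ck ∈ DD → c0 ≠ ck →
      ((∑ c ∈ DD, (P c).card) + 2*t) + 2*t ≤ (P c0).card + (P ck).card + DD.card * (2*t)
        ∧ 2 ≤ DD.card := by
    intro c0 ck hc0 hck hne
    have hck' : ck ∈ DD.erase c0 := Finset.mem_erase.2 ⟨Ne.symm hne, hck⟩
    have h1 : ∑ c ∈ DD, (P c).card = (P c0).card + ∑ c ∈ DD.erase c0, (P c).card :=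
      (Finset.add_sum_erase DD _ hc0).symm
    have h1b : ∑ c ∈ DD.erase c0, (P c).card
        = (P ck).card + ∑ c ∈ (DD.erase c0).erase ck, (P c).card :=
      (Finset.add_sum_erase _ _ hck').symm
    have h2 : ∑ c ∈ (DD.erase c0).erase ck, (P c).card ≤ ((DD.erase c0).erase ck).card * (2*t) := by
      calc ∑ c ∈ (DD.erase c0).erase ck, (P c).card ≤ ((DD.erase c0).erase ck).card • (2*t) :=
          Finset.sum_le_card_nsmul _ _ (2*t) (fun c _ => hlen2t c)
        _ = ((DD.erase c0).erase ck).card * (2*t) := smul_eq_mul _ _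
    have h3 : ((DD.erase c0).erase ck).card + 1 = (DD.erase c0).card :=
      Finset.card_erase_add_one hck'
    have h3b : (DD.erase c0).card + 1 = DD.card := Finset.card_erase_add_one hc0
    have h4 : ((DD.erase c0).erase ck).card * (2*t) + 2*t + 2*t = DD.card * (2*t) := by
      have h5 : ((DD.erase c0).erase ck).card + 2 = DD.card := by omega
      rw [← h5]; ring
    exact ⟨by omega, by omega⟩
  have hTcard : (T \ DD).card + DD.card = T.card := by
    exact Finset.card_sdiff_add_card_eq_card hDDT
  -- the natural number bound
  obtain ⟨w, hw⟩ : ∃ w, 2*t = w + 1 := ⟨2*t - 1, by omega⟩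
  have hw1 : 1 ≤ w := by omega
  have hnat : 2 * Q.card ≤ 2*s + 4*t + k*w := by
    have hQb : Q.card ≤ (∑ c ∈ DD, (P c).card)
        + ((T \ DD).card + ∑ c ∈ T \ DD, ((touchF c).card - 1)) := by
      omega
    set m' : ℕ := DD.card with hm'def
    set X : ℕ := ∑ c ∈ T \ DD, ((touchF c).card - 1) with hXdef
    set Y : ℕ := (T \ DD).card with hYdef
    set Sl : ℕ := ∑ c ∈ DD, (P c).card with hSldef
    have hXw : X ≤ X*w := by
      calc X = X*1 := (mul_one X).symm
        _ ≤ X*w := Nat.mul_le_mul_left X hw1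
    have hA0struct : A0 → ∃ c0 : Fin (s+2*t), c0 ∈ DD ∧ (∀ c ∈ T, (c0:ℕ) ≤ (c:ℕ)) := by
      intro hA0
      rw [hA0def] at hA0
      obtain ⟨hA0r, p0, hp0⟩ := hA0
      obtain ⟨c0, hc0⟩ := hchain p0 (hsub 0 hp0)
      have hdc0 : DecChain (F (0 : Fin (k+1))) := hmonoD 0 (by simpa using hA0r)
      have hF0chain : ∀ q ∈ F (0 : Fin (k+1)), q ∈ P c0 := by
        intro q hq
        obtain ⟨b, hb⟩ := hchain q (hsub 0 hq)
        have heq := hdecone 0 hdc0 p0 q hp0 hq c0 b hc0 hb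
        rw [← heq] at hb
        exact hb
      refine ⟨c0, ?_, ?_⟩
      · simp only [hDD, Finset.mem_filter]
        exact ⟨Finset.mem_univ _, 0, by simpa using hA0r, ⟨p0, Finset.mem_inter.2 ⟨hp0, hc0⟩⟩⟩
      · intro c hcT
        simp only [hT, Finset.mem_filter] at hcT
        obtain ⟨j, hj⟩ := hcT.2
        simp only [htouchF, Finset.mem_filter] at hj
        obtain ⟨q, hq⟩ := hj.2
        rw [Finset.mem_inter] at hq
        by_cases hj0 : j = (0 : Fin (k+1))
        · rw [hj0] at hq
          have hqc0 := hF0chain q hq.1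
          have heq : c = c0 := by
            by_contra hne
            exact hPdisj c c0 hne q hq.2 hqc0
          simp [heq]
        · have hpos : (0 : Fin (k+1)) < j := by
            rw [Fin.lt_def]
            simp only [Fin.val_zero]
            by_contra hle
            push_neg at hle
            exact hj0 (Fin.ext (by simp only [Fin.val_zero]; omega)).symm
          have hlt := hx 0 j hpos p0 hp0 q hq.1
          exact Fin.le_def.mp (hL1 c0 c p0 q hc0 hq.2 hlt)
    have hAkstruct : Ak → ∃ ck : Fin (s+2*t), ck ∈ DD ∧ (∀ c ∈ T, (c:ℕ) ≤ (ck:ℕ)) := by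
      intro hAk
      rw [hAkdef] at hAk
      obtain ⟨hAkr, pk, hpk⟩ := hAk
      obtain ⟨ck, hck⟩ := hchain pk (hsub (Fin.last k) hpk)
      have hdck : DecChain (F (Fin.last k)) := hmonoD (Fin.last k) (by simpa [Fin.val_last] using hAkr)
      have hFkchain : ∀ q ∈ F (Fin.last k), q ∈ P ck := by
        intro q hq
        obtain ⟨b, hb⟩ := hchain q (hsub (Fin.last k) hq)
        have heq := hdecone (Fin.last k) hdck pk q hpk hq ck b hck hb
        rw [← heq] at hb
        exact hb
      refine ⟨ck, ?_, ?_⟩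
      · simp only [hDD, Finset.mem_filter]
        exact ⟨Finset.mem_univ _, Fin.last k, by simpa [Fin.val_last] using hAkr,
          ⟨pk, Finset.mem_inter.2 ⟨hpk, hck⟩⟩⟩
      · intro c hcT
        simp only [hT, Finset.mem_filter] at hcT
        obtain ⟨j, hj⟩ := hcT.2
        simp only [htouchF, Finset.mem_filter] at hj
        obtain ⟨q, hq⟩ := hj.2
        rw [Finset.mem_inter] at hq
        by_cases hjk : j = Fin.last k
        · rw [hjk] at hq
          have hqck := hFkchain q hq.1
          have heq : c = ck := by
            by_contra hne
            exact hPdisj c ck hne q hq.2 hqck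
          simp [heq]
        · have hpos : j < Fin.last k := by
            rw [Fin.lt_def, Fin.val_last]
            have h1 := j.isLt
            by_contra hle
            push_neg at hle
            exact hjk (Fin.ext (by rw [Fin.val_last]; omega))
          have hlt := hx j (Fin.last k) hpos q hq.1 pk hpk
          exact Fin.le_def.mp (hL1 c ck q pk hq.2 hck hlt)
    by_cases hA0 : A0 <;> by_cases hAk : Ak
    · -- A0 and Ak
      have ha0v : a0 = 1 := by rw [ha0, if_pos hA0]
      have hakv : ak = 1 := by rw [hak, if_pos hAk]
      obtain ⟨c0, hc0DD, hTlow⟩ := hA0struct hA0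
      obtain ⟨ck, hckDD, hTtop⟩ := hAkstruct hAk
      by_cases hcc : c0 = ck
      · have hT1 : ∀ c ∈ T, c = c0 := by
          intro c hc
          have h1 := hTlow c hc
          have h2 := hTtop c hc
          have h3 : (ck:ℕ) = (c0:ℕ) := by rw [hcc]
          apply Fin.ext
          omega
        have hYz : Y = 0 := by
          rw [hYdef]
          rw [Finset.card_eq_zero, Finset.eq_empty_iff_forall_notMem]
          intro c hcm
          rw [Finset.mem_sdiff] at hcm
          have hceq := hT1 c hcm.1
          exact hcm.2 (by rw [hceq]; exact hc0DD)
        have hm1 : m' = 1 := by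
          have hsub1 : DD ⊆ {c0} := by
            intro c hcm
            have := hT1 c (hDDT hcm)
            simp [this]
          have h1 : DD.card ≤ 1 := by
            calc DD.card ≤ ({c0} : Finset (Fin (s+2*t))).card := Finset.card_le_card hsub1
              _ = 1 := Finset.card_singleton _
          have h2 : 1 ≤ DD.card := Finset.card_pos.2 ⟨c0, hc0DD⟩
          omega
        have hSl1 : Sl ≤ 2*t := by
          calc Sl ≤ m' * (2*t) := hSig2t
            _ = 2*t := by rw [hm1]; ring
        have hS2 : 2*X ≤ k := by omega
        have hprod : 2*(X*w) ≤ k*w := by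
          calc 2*(X*w) = (2*X)*w := by ring
            _ ≤ k*w := Nat.mul_le_mul_right w hS2
        linarith [hQb, hSl1, hprod, hXw, hYz]
      · have hc0ck : (c0:ℕ) < (ck:ℕ) := by
          have h1 := hTlow ck (hDDT hckDD)
          rcases Nat.lt_or_ge (c0:ℕ) (ck:ℕ) with h | h
          · exact h
          · exact absurd (Fin.ext (by omega) : c0 = ck) hcc
        obtain ⟨hSl2, hm2⟩ := hSigsplit2 c0 ck hc0DD hckDD hcc
        have hYm2 : Y + m' + (c0:ℕ) ≤ (ck:ℕ) + 1 := by
          have h2 : T.card ≤ (ck:ℕ) + 1 - (c0:ℕ) :=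
            hcardIcc T (c0:ℕ) (ck:ℕ) (fun c hc => ⟨hTlow c hc, hTtop c hc⟩)
          omega
        have hSlB : Sl + 4*t + (ck:ℕ) + 1 ≤ (t + (c0:ℕ)) + (t + (s+2*t)) + (m'*w + m') := by
          have h2 := hlenlow c0
          have h3 := hlenhigh ck
          have h4 : m' * (2*t) = m' * w + m' := by rw [hw]; ring
          linarith
        have hS2 : 2*(m' + X) ≤ k + 2 := by omega
        have hprod : 2*(m'*w) + 2*(X*w) ≤ k*w + 2*w := by
          calc 2*(m'*w) + 2*(X*w) = (2*(m'+X))*w := by ring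
            _ ≤ (k+2)*w := Nat.mul_le_mul_right w hS2
            _ = k*w + 2*w := by ring
        linarith [hQb, hSlB, hYm2, hprod, hXw, hw]
    · -- A0 and not Ak
      have ha0v : a0 = 1 := by rw [ha0, if_pos hA0]
      have hakv : ak = 0 := by rw [hak, if_neg hAk]
      obtain ⟨c0, hc0DD, hTlow⟩ := hA0struct hA0
      have hYmA : Y + m' + (c0:ℕ) ≤ s + 2*t := by
        have h2 : T.card ≤ (s + 2*t - 1) + 1 - (c0:ℕ) :=
          hcardIcc T (c0:ℕ) (s + 2*t - 1) (fun c hc => ⟨hTlow c hc, by have := c.isLt; omega⟩)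
        have := c0.isLt
        omega
      have hSlA : Sl + 2*t ≤ (t + (c0:ℕ)) + (m'*w + m') := by
        have h1 := hSigsplit c0 hc0DD
        have h2 := hlenlow c0
        have h4 : m' * (2*t) = m' * w + m' := by rw [hw]; ring
        linarith
      have hS2 : 2*(m' + X) ≤ k + 1 := by omega
      have hprod : 2*(m'*w) + 2*(X*w) ≤ k*w + w := by
        calc 2*(m'*w) + 2*(X*w) = (2*(m'+X))*w := by ring
          _ ≤ (k+1)*w := Nat.mul_le_mul_right w hS2
          _ = k*w + w := by ring
      linarith [hQb, hSlA, hYmA, hprod, hXw, hw]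
    · -- not A0 and Ak
      have ha0v : a0 = 0 := by rw [ha0, if_neg hA0]
      have hakv : ak = 1 := by rw [hak, if_pos hAk]
      obtain ⟨ck, hckDD, hTtop⟩ := hAkstruct hAk
      have hYmK : Y + m' ≤ (ck:ℕ) + 1 := by
        have h2 : T.card ≤ (ck:ℕ) + 1 - 0 :=
          hcardIcc T 0 (ck:ℕ) (fun c hc => ⟨Nat.zero_le _, hTtop c hc⟩)
        omega
      have hSlK : Sl + 2*t + (ck:ℕ) + 1 ≤ t + (s+2*t) + (m'*w + m') := by
        have h1 := hSigsplit ck hckDD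
        have h3 := hlenhigh ck
        have h4 : m' * (2*t) = m' * w + m' := by rw [hw]; ring
        linarith
      have hS2 : 2*(m' + X) ≤ k + 1 := by omega
      have hprod : 2*(m'*w) + 2*(X*w) ≤ k*w + w := by
        calc 2*(m'*w) + 2*(X*w) = (2*(m'+X))*w := by ring
          _ ≤ (k+1)*w := Nat.mul_le_mul_right w hS2
          _ = k*w + w := by ring
      linarith [hQb, hSlK, hYmK, hprod, hXw, hw]
    · -- neither
      have ha0v : a0 = 0 := by rw [ha0, if_neg hA0]
      have hakv : ak = 0 := by rw [hak, if_neg hAk]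
      have hYm : Y + m' ≤ s + 2*t := by
        have h2 : T.card ≤ Fintype.card (Fin (s+2*t)) := Finset.card_le_univ T
        simp only [Fintype.card_fin] at h2
        omega
      have hSlN : Sl ≤ m'*w + m' := by
        have h4 : m' * (2*t) = m' * w + m' := by rw [hw]; ring
        linarith [hSig2t]
      have hS2 : 2*(m' + X) ≤ k := by omega
      have hprod : 2*(m'*w) + 2*(X*w) ≤ k*w := by
        calc 2*(m'*w) + 2*(X*w) = (2*(m'+X))*w := by ring
          _ ≤ k*w := Nat.mul_le_mul_right w hS2
      linarith [hQb, hSlN, hYm, hprod, hXw]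
  -- conclude over the reals
  have hwr : (w:ℝ) = 2*(t:ℝ) - 1 := by
    have : ((2*t : ℕ) : ℝ) = ((w + 1 : ℕ) : ℝ) := by rw [hw]
    push_cast at this
    linarith
  have hcast : (2 * Q.card : ℝ) ≤ 2*(s:ℝ) + 4*(t:ℝ) + (k:ℝ)*(w:ℝ) := by
    exact_mod_cast Nat.cast_le.mpr hnat
  have hkw : (k:ℝ)*(w:ℝ) = 2*(k:ℝ)*(t:ℝ) - (k:ℝ) := by rw [hwr]; ring
  push_cast at hcast
  linarith
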